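/- arXiv:1412.4662 — 6 statements merged into one kernel-verified Lean document; each statement's English description precedes it below -/
import Mathlib

section
/- A reaction network is not endotactic if and only if there exists a nonzero vector w ∈ ℝ^m and a partition of the reaction set R into disjoint sets R₀, R₋, R₊ such that: (E1) w·(y'(i) − y(i)) = 0 for all i ∈ R₀; (E2) w·(y'(i) − y(i)) < 0 for all i ∈ R₋; (E3) w·(y(i) − y(j)) ≤ 0 for all i ∈ R₋ and j ∈ R₊; and (E4) R₋ is nonempty. -/
/-- Dot product on `Fin m → ℝ`. -/
def dot {m : ℕ} (w v : Fin m → ℝ) : ℝ := ∑ k, w k * v k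

/-- A reaction network (reactions indexed by `ι`, sources `y`, targets `y'`) is endotactic. -/
def Endotactic {m : ℕ} {ι : Type*} [Fintype ι] (y y' : ι → Fin m → ℝ) : Prop :=
  ∀ w : Fin m → ℝ, ∀ i : ι, dot w (y' i - y i) < 0 →
    ∃ j : ι, dot w (y j - y i) < 0 ∧ 0 < dot w (y' j - y j)

lemma dot_sub {m : ℕ} (w a b : Fin m → ℝ) : dot w (a - b) = dot w a - dot w b := by
  simp [dot, mul_sub, Finset.sum_sub_distrib]

/-- A network is not endotactic iff there is a nonzero `w` and a partition
`R₀, R₋, R₊` of the reactions satisfying E1–E4. -/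
theorem not_endotactic_iff {m : ℕ} {ι : Type*} [Fintype ι] [DecidableEq ι] (y y' : ι → Fin m → ℝ) :
    ¬ Endotactic y y' ↔
      ∃ w : Fin m → ℝ, w ≠ 0 ∧
        ∃ R0 Rm Rp : Finset ι,
          Disjoint R0 Rm ∧ Disjoint R0 Rp ∧ Disjoint Rm Rp ∧
          R0 ∪ Rm ∪ Rp = Finset.univ ∧
          (∀ i ∈ R0, dot w (y' i - y i) = 0) ∧
          (∀ i ∈ Rm, dot w (y' i - y i) < 0) ∧
          (∀ i ∈ Rm, ∀ j ∈ Rp, dot w (y i - y j) ≤ 0) ∧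
          Rm.Nonempty := by
  classical
  constructor
  · intro h
    rw [Endotactic] at h
    push_neg at h
    obtain ⟨w, i0, hi0, hfail⟩ := h
    refine ⟨w, ?_, ?_⟩
    · rintro rfl
      simp [dot] at hi0
    · set c := dot w (y i0) with hc
      refine ⟨Finset.univ.filter (fun i => dot w (y' i - y i) = 0),
        Finset.univ.filter (fun i => dot w (y' i - y i) < 0 ∧ dot w (y i) ≤ c),
        Finset.univ.filter (fun i => 0 < dot w (y' i - y i) ∨
          (dot w (y' i - y i) < 0 ∧ c < dot w (y i))),
        ?_, ?_, ?_, ?_, ?_, ?_, ?_, ?_⟩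
      · rw [Finset.disjoint_left]
        intro a ha hb
        simp only [Finset.mem_filter, Finset.mem_univ, true_and] at ha hb
        linarith [hb.1]
      · rw [Finset.disjoint_left]
        intro a ha hb
        simp only [Finset.mem_filter, Finset.mem_univ, true_and] at ha hb
        rcases hb with hb | hb <;> linarith [hb]
      · rw [Finset.disjoint_left]
        intro a ha hb
        simp only [Finset.mem_filter, Finset.mem_univ, true_and] at ha hb
        rcases hb with hb | hb
        · linarith [ha.1]
        · linarith [ha.2, hb.2]
      · ext i
        simp only [Finset.mem_union, Finset.mem_filter, Finset.mem_univ, true_and, iff_true]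
        rcases lt_trichotomy (dot w (y' i - y i)) 0 with h1 | h1 | h1
        · rcases le_or_gt (dot w (y i)) c with h2 | h2
          · exact Or.inl (Or.inr ⟨h1, h2⟩)
          · exact Or.inr (Or.inr ⟨h1, h2⟩)
        · exact Or.inl (Or.inl h1)
        · exact Or.inr (Or.inl h1)
      · intro i hi
        simp only [Finset.mem_filter, Finset.mem_univ, true_and] at hi
        exact hi
      · intro i hi
        simp only [Finset.mem_filter, Finset.mem_univ, true_and] at hi
        exact hi.1
      · intro i hi j hj
        simp only [Finset.mem_filter, Finset.mem_univ, true_and] at hi hj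
        rw [dot_sub]
        rcases hj with hj | hj
        · have h1 := hfail j
          have h2 : ¬ dot w (y j - y i0) < 0 := fun hlt =>
            absurd hj (not_lt.mpr (h1 hlt))
          rw [dot_sub] at h2
          push_neg at h2
          linarith [hi.2]
        · linarith [hi.2, hj.2]
      · refine ⟨i0, ?_⟩
        simp only [Finset.mem_filter, Finset.mem_univ, true_and]
        exact ⟨hi0, le_refl c⟩
  · rintro ⟨w, hw, R0, Rm, Rp, h01, h02, h12, hun, hE1, hE2, hE3, i, hi⟩ hE
    obtain ⟨j, hj1, hj2⟩ := hE w i (hE2 i hi)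
    have hju : j ∈ R0 ∪ Rm ∪ Rp := by rw [hun]; exact Finset.mem_univ j
    rcases Finset.mem_union.mp hju with hju | hjp
    · rcases Finset.mem_union.mp hju with hj0 | hjm
      · linarith [hE1 j hj0]
      · linarith [hE2 j hjm]
    · have := hE3 i hi j hjp
      rw [dot_sub] at this hj1
      linarith
end

section
/- A reaction network is not strongly endotactic if and only if there exists a nonzero vector w ∈ ℝ^m and a partition of the reaction set R into disjoint sets R₀, R₋, R₊ such that: w·(y'(i) − y(i)) = 0 for all i ∈ R₀; w·(y'(i) − y(i)) < 0 for all i ∈ R₋; R₋ is nonempty; and either (a) R₀ is nonempty and w·(y(i) − y(j)) < 0 for all i ∈ R₀ and j ∈ R₋ ∪ R₊, or (b) R₀ is empty and w·(y(i) − y(j)) ≤ 0 for all i ∈ R₋ and j ∈ R₊. -/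
/-- Strongly endotactic network. -/
def StronglyEndotactic {m : ℕ} {ι : Type*} [Fintype ι] (y y' : ι → Fin m → ℝ) : Prop :=
  ∀ w : Fin m → ℝ, ∀ i : ι, dot w (y' i - y i) < 0 →
    ∃ j : ι, dot w (y j - y i) < 0 ∧ 0 < dot w (y' j - y j) ∧
      ∀ k : ι, 0 ≤ dot w (y k - y j)

/-- A network is not strongly endotactic iff there is a nonzero `w` and a partition
`R₀, R₋, R₊` satisfying E1, E2, E4 and one of SE3(a), SE3(b). -/
theorem not_stronglyEndotactic_iff {m : ℕ} {ι : Type*} [Fintype ι] [DecidableEq ι]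
    (y y' : ι → Fin m → ℝ) :
    ¬ StronglyEndotactic y y' ↔
      ∃ w : Fin m → ℝ, w ≠ 0 ∧
        ∃ R0 Rm Rp : Finset ι,
          Disjoint R0 Rm ∧ Disjoint R0 Rp ∧ Disjoint Rm Rp ∧
          R0 ∪ Rm ∪ Rp = Finset.univ ∧
          (∀ i ∈ R0, dot w (y' i - y i) = 0) ∧
          (∀ i ∈ Rm, dot w (y' i - y i) < 0) ∧
          Rm.Nonempty ∧
          ((R0.Nonempty ∧ ∀ i ∈ R0, ∀ j ∈ Rm ∪ Rp, dot w (y i - y j) < 0) ∨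
           (R0 = ∅ ∧ ∀ i ∈ Rm, ∀ j ∈ Rp, dot w (y i - y j) ≤ 0)) := by
  classical
  constructor
  · intro h
    simp only [StronglyEndotactic, not_forall] at h
    obtain ⟨w, i0, h⟩ := h
    obtain ⟨h0, hj⟩ := h
    push_neg at hj
    refine ⟨w, ?_, ?_⟩
    · rintro rfl
      simp [dot] at h0
    haveI : Nonempty ι := ⟨i0⟩
    set f : ι → ℝ := fun k => dot w (y k) with hf
    set μ : ℝ := Finset.univ.inf' Finset.univ_nonempty f with hμ
    have hmin : ∀ k : ι, μ ≤ f k := fun k => Finset.inf'_le f (Finset.mem_univ k)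
    by_cases hc : ∃ j, f j = μ ∧ dot w (y' j - y j) < 0
    · obtain ⟨j, hjμ, hjneg⟩ := hc
      refine ⟨∅, {j}, Finset.univ \ {j}, by simp, by simp, Finset.disjoint_sdiff, by
        simp [Finset.union_sdiff_of_subset (Finset.subset_univ {j})], by simp, ?_,
        ⟨j, Finset.mem_singleton_self j⟩, Or.inr ⟨rfl, ?_⟩⟩
      · intro i hi
        rw [Finset.mem_singleton] at hi
        subst hi; exact hjneg
      · intro i hi k hk
        rw [Finset.mem_singleton] at hi
        subst hi
        rw [dot_sub]
        have := hmin k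
        rw [← hjμ] at this
        linarith
    · push_neg at hc
      -- every minimizer has zero reaction value
      have hzero : ∀ j, f j = μ → dot w (y' j - y j) = 0 := by
        intro j hjμ
        have hge := hc j hjμ
        by_contra hne
        have hpos : 0 < dot w (y' j - y j) := lt_of_le_of_ne hge (Ne.symm hne)
        rcases lt_or_ge (f j) (f i0) with hlt | hle
        · have h1 : dot w (y j - y i0) < 0 := by rw [dot_sub]; linarith
          obtain ⟨k, hk⟩ := hj j h1 hpos
          rw [dot_sub] at hk
          have e1 : f k = dot w (y k) := rfl
          have e2 : f j = dot w (y j) := rfl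
          linarith [hmin k]
        · have hi0μ : f i0 = μ := le_antisymm (by rw [← hjμ]; exact hle) (hmin i0)
          exact absurd h0 (not_lt.mpr (hc i0 hi0μ))
      obtain ⟨j0, -, hj0⟩ := Finset.exists_mem_eq_inf' (Finset.univ_nonempty (α := ι)) f
      set R0 : Finset ι := Finset.univ.filter (fun k => f k = μ) with hR0
      set Rm : Finset ι := Finset.univ.filter (fun k => dot w (y' k - y k) < 0) with hRm
      have hd0m : Disjoint R0 Rm := by
        rw [Finset.disjoint_left]
        intro a ha hb
        rw [hR0, Finset.mem_filter] at ha
        rw [hRm, Finset.mem_filter] at hb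
        have := hzero a ha.2
        linarith [hb.2]
      refine ⟨R0, Rm, Finset.univ \ (R0 ∪ Rm), hd0m, ?_, ?_, ?_, ?_, ?_, ?_, Or.inl ⟨?_, ?_⟩⟩
      · exact Finset.disjoint_sdiff.mono_left Finset.subset_union_left
      · exact Finset.disjoint_sdiff.mono_left Finset.subset_union_right
      · exact Finset.union_sdiff_of_subset (Finset.subset_univ _)
      · intro i hi
        rw [hR0, Finset.mem_filter] at hi
        exact hzero i hi.2
      · intro i hi
        rw [hRm, Finset.mem_filter] at hi
        exact hi.2
      · exact ⟨i0, by rw [hRm, Finset.mem_filter]; exact ⟨Finset.mem_univ i0, h0⟩⟩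
      · exact ⟨j0, by rw [hR0, Finset.mem_filter]; exact ⟨Finset.mem_univ j0, hj0.symm⟩⟩
      · intro i hi j hjm
        rw [hR0, Finset.mem_filter] at hi
        have hjne : f j ≠ μ := by
          intro hjμ
          rcases Finset.mem_union.mp hjm with hj1 | hj2
          · rw [hRm, Finset.mem_filter] at hj1
            have := hzero j hjμ
            linarith [hj1.2]
          · rw [Finset.mem_sdiff] at hj2
            exact hj2.2 (Finset.mem_union_left _ (by rw [hR0, Finset.mem_filter]; exact ⟨Finset.mem_univ j, hjμ⟩))
        have : μ < f j := lt_of_le_of_ne (hmin j) (Ne.symm hjne)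
        rw [dot_sub]
        have e1 : f i = dot w (y i) := rfl
        have e2 : f j = dot w (y j) := rfl
        linarith [hi.2]
  · rintro ⟨w, hw, R0, Rm, Rp, d0m, d0p, dmp, hun, hE1, hE2, ⟨i, hi⟩, hor⟩ hSE
    obtain ⟨j, h1, h2, h3⟩ := hSE w i (hE2 i hi)
    have hjmem : j ∈ R0 ∪ Rm ∪ Rp := hun ▸ Finset.mem_univ j
    rcases Finset.mem_union.mp hjmem with hj01 | hjp
    · rcases Finset.mem_union.mp hj01 with hj0 | hjm
      · rcases hor with ⟨-, ha⟩ | ⟨he, -⟩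
        · have h4 := hE1 j hj0
          linarith
        · rw [he] at hj0; exact absurd hj0 (Finset.notMem_empty j)
      · linarith [hE2 j hjm]
    · rcases hor with ⟨⟨i0', hi0'⟩, ha⟩ | ⟨-, hb⟩
      · have h4 := ha i0' hi0' j (Finset.mem_union_right _ hjp)
        have h5 := h3 i0'
        rw [dot_sub] at h4 h5
        linarith
      · have h4 := hb i hi j hjp
        rw [dot_sub] at h1 h4
        linarith
end

section
/- A single-species reaction network (reactions between real-number complexes) is endotactic if and only if both of the following hold: (+) for every reaction a → a' with a < a' there is a reaction b → b' with b > b' and b > a; and (−) for every reaction a → a' with a > a' there is a reaction b → b' with b < b' and b < a. -/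
/-- A single-species network (sources `y`, targets `y'` in `ℝ`) is endotactic
in the sense of the general definition specialized to one species. -/
def Endotactic1 {ι : Type*} [Fintype ι] (y y' : ι → ℝ) : Prop :=
  ∀ w : ℝ, ∀ i : ι, w * (y' i - y i) < 0 →
    ∃ j : ι, w * (y j - y i) < 0 ∧ 0 < w * (y' j - y j)

/-- A single-species network is endotactic iff conditions (+) and (−) hold. -/
theorem endotactic1_iff_plus_minus {ι : Type*} [Fintype ι] (y y' : ι → ℝ) :
    Endotactic1 y y' ↔
      ((∀ i : ι, y i < y' i → ∃ j : ι, y' j < y j ∧ y i < y j) ∧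
       (∀ i : ι, y' i < y i → ∃ j : ι, y j < y' j ∧ y j < y i)) := by
  constructor
  · intro h
    constructor
    · intro i hi
      obtain ⟨j, hj1, hj2⟩ := h (-1) i (by nlinarith)
      exact ⟨j, by nlinarith, by nlinarith⟩
    · intro i hi
      obtain ⟨j, hj1, hj2⟩ := h 1 i (by nlinarith)
      exact ⟨j, by nlinarith, by nlinarith⟩
  · rintro ⟨hp, hm⟩ w i hi
    rcases lt_trichotomy w 0 with hw | hw | hw
    · obtain ⟨j, hj1, hj2⟩ := hp i (by nlinarith)
      exact ⟨j, by nlinarith, by nlinarith⟩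
    · simp [hw] at hi
    · obtain ⟨j, hj1, hj2⟩ := hm i (by nlinarith)
      exact ⟨j, by nlinarith, by nlinarith⟩
end

section
/- The futile cycle network is not endotactic. Specifically, for the network with species (S₀, E, ES₀, S₁, F, FS₁) and reactions R₁: S₀+E → ES₀, R₂: ES₀ → S₀+E, R₃: ES₀ → S₁+E, R₄: S₁+F → FS₁, R₅: FS₁ → S₁+F, R₆: FS₁ → S₀+F, the vector w = (9.9, 0.1, 10, 0, 10, 10) ∈ ℝ⁶ satisfies w·y(i) = 10 for every reaction source y(i), and w·(y'(3) − y(3)) = −9.9 < 0, which witnesses that the network is not endotactic. -/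
/-- Source vectors of the futile cycle (species order S₀, E, ES₀, S₁, F, FS₁). -/
def futileSrc : Fin 6 → Fin 6 → ℝ :=
  ![![1,1,0,0,0,0], ![0,0,1,0,0,0], ![0,0,1,0,0,0],
    ![0,0,0,1,1,0], ![0,0,0,0,0,1], ![0,0,0,0,0,1]]

/-- Target vectors of the futile cycle. -/
def futileTgt : Fin 6 → Fin 6 → ℝ :=
  ![![0,0,1,0,0,0], ![1,1,0,0,0,0], ![0,1,0,1,0,0],
    ![0,0,0,0,0,1], ![0,0,0,1,1,0], ![1,0,0,0,1,0]]

@[simp] lemma vec6_0 {α : Type*} (a b c d e f : α) :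
    ![a,b,c,d,e,f] (0 : Fin 6) = a := rfl
@[simp] lemma vec6_1 {α : Type*} (a b c d e f : α) :
    ![a,b,c,d,e,f] (1 : Fin 6) = b := rfl
@[simp] lemma vec6_2 {α : Type*} (a b c d e f : α) :
    ![a,b,c,d,e,f] (2 : Fin 6) = c := rfl
@[simp] lemma vec6_3 {α : Type*} (a b c d e f : α) :
    ![a,b,c,d,e,f] (3 : Fin 6) = d := rfl
@[simp] lemma vec6_4 {α : Type*} (a b c d e f : α) :
    ![a,b,c,d,e,f] (4 : Fin 6) = e := rfl
@[simp] lemma vec6_5 {α : Type*} (a b c d e f : α) :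
    ![a,b,c,d,e,f] (5 : Fin 6) = f := rfl

/-- The futile cycle is not endotactic, as witnessed by `w = (9.9, 0.1, 10, 0, 10, 10)`:
every source complex has `w·y(i) = 10`, while reaction `R₃ : ES₀ → S₁ + E`
satisfies `w·(y'(3) − y(3)) = −9.9 < 0`. -/
theorem futileCycle_not_endotactic :
    (∀ i : Fin 6, dot ![9.9, 0.1, 10, 0, 10, 10] (futileSrc i) = 10) ∧
    dot ![9.9, 0.1, 10, 0, 10, 10] (futileTgt 2 - futileSrc 2) = -9.9 ∧
    ¬ Endotactic futileSrc futileTgt := by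
  refine ⟨?_, ?_, ?_⟩
  · intro i
    fin_cases i <;>
      · simp only [dot, futileSrc, Fin.sum_univ_six, vec6_0, vec6_1, vec6_2, vec6_3, vec6_4, vec6_5]
        norm_num
  · simp only [dot, futileSrc, futileTgt, Fin.sum_univ_six, Pi.sub_apply, vec6_0, vec6_1, vec6_2, vec6_3, vec6_4, vec6_5]
    norm_num
  · intro h
    obtain ⟨j, hj1, hj2⟩ := h ![9.9, 0.1, 10, 0, 10, 10] 2 (by
      simp only [dot, futileSrc, futileTgt, Fin.sum_univ_six, Pi.sub_apply, vec6_0, vec6_1, vec6_2, vec6_3, vec6_4, vec6_5]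
      norm_num)
    fin_cases j <;>
      · simp only [dot, futileSrc, Fin.sum_univ_six, Pi.sub_apply, vec6_0, vec6_1, vec6_2, vec6_3, vec6_4, vec6_5] at hj1
        norm_num at hj1
end

section
/- For the n-site processive phosphorylation/dephosphorylation network, the vector w assigning weight 1 to each complex ES₀,…,ES_{n−1}, FS₁,…,FS_n, to S_n, and to E, and weight 0 to S₀ and F, satisfies w·y = 1 for every source complex y of the network, while the reaction FS₁ → F + S₀ satisfies w·(y' − y) = −1 < 0. Consequently the network is not endotactic. -/
/-- Endotacticity for a network given as a set of (source, target) pairs. -/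
def EndotacticSet {m : ℕ} (R : Set ((Fin m → ℝ) × (Fin m → ℝ))) : Prop :=
  ∀ w : Fin m → ℝ, ∀ r ∈ R, dot w (r.2 - r.1) < 0 →
    ∃ r' ∈ R, dot w (r'.1 - r.1) < 0 ∧ 0 < dot w (r'.2 - r'.1)

/-- The unit complex supported on species `j0`, among `2n+4` species. -/
def unitv (n j0 : ℕ) : Fin (2 * n + 4) → ℝ := fun j => if (j : ℕ) = j0 then 1 else 0

/-- The `n`-site processive phosphorylation/dephosphorylation network.
Species order: `ES₀,…,ES_{n−1}` at indices `0,…,n−1`; `FS₁,…,FS_n` at indices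
`n,…,2n−1`; `S₀` at `2n`; `S_n` at `2n+1`; `E` at `2n+2`; `F` at `2n+3`. -/
def procReactions (n : ℕ) : Set ((Fin (2 * n + 4) → ℝ) × (Fin (2 * n + 4) → ℝ)) :=
  {p |
    p = (unitv n (2 * n) + unitv n (2 * n + 2), unitv n 0) ∨        -- S₀+E → ES₀
    p = (unitv n 0, unitv n (2 * n) + unitv n (2 * n + 2)) ∨        -- ES₀ → S₀+E
    (∃ i, i + 1 < n ∧ p = (unitv n i, unitv n (i + 1))) ∨           -- ES_i → ES_{i+1}
    (∃ i, i + 1 < n ∧ p = (unitv n (i + 1), unitv n i)) ∨           -- ES_{i+1} → ES_i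
    p = (unitv n (n - 1), unitv n (2 * n + 1) + unitv n (2 * n + 2)) ∨ -- ES_{n−1} → S_n+E
    p = (unitv n (2 * n + 1) + unitv n (2 * n + 3), unitv n (2 * n - 1)) ∨ -- S_n+F → FS_n
    p = (unitv n (2 * n - 1), unitv n (2 * n + 1) + unitv n (2 * n + 3)) ∨ -- FS_n → S_n+F
    (∃ i, 1 ≤ i ∧ i + 1 ≤ n ∧ p = (unitv n (n + i), unitv n (n + i - 1))) ∨ -- FS_{i+1} → FS_i
    (∃ i, 1 ≤ i ∧ i + 1 ≤ n ∧ p = (unitv n (n + i - 1), unitv n (n + i))) ∨ -- FS_i → FS_{i+1}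
    p = (unitv n n, unitv n (2 * n) + unitv n (2 * n + 3))}         -- FS₁ → S₀+F

/-- The weight vector giving `1` to every `ES_i`, `FS_i`, `S_n`, `E` and `0` to `S₀`, `F`. -/
def wproc (n : ℕ) : Fin (2 * n + 4) → ℝ :=
  fun j => if (j : ℕ) = 2 * n ∨ (j : ℕ) = 2 * n + 3 then 0 else 1

lemma dot_add {m : ℕ} (w a b : Fin m → ℝ) : dot w (a + b) = dot w a + dot w b := by
  simp [dot, mul_add, Finset.sum_add_distrib]

lemma dot_unitv (n : ℕ) (w : Fin (2 * n + 4) → ℝ) (j0 : ℕ) (h : j0 < 2 * n + 4) :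
    dot w (unitv n j0) = w ⟨j0, h⟩ := by
  have hk : ∀ k : Fin (2 * n + 4), ((k : ℕ) = j0) = (k = ⟨j0, h⟩) := by
    intro k; simp [Fin.ext_iff]
  simp [dot, unitv, hk, mul_ite]

lemma dval (n j0 : ℕ) :
    dot (wproc n) (unitv n j0) =
      if j0 < 2 * n + 4 ∧ j0 ≠ 2 * n ∧ j0 ≠ 2 * n + 3 then 1 else 0 := by
  by_cases h : j0 < 2 * n + 4
  · rw [dot_unitv n _ j0 h]
    simp only [wproc]
    split_ifs <;> simp_all
  · have hz : unitv n j0 = 0 := funext fun k => by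
      simp only [unitv, Pi.zero_apply]; rw [if_neg (by omega)]
    rw [hz, if_neg (fun hc => h hc.1)]
    simp [dot]

/-- For the `n`-site processive network, `w` gives every source complex value `1`,
while the reaction `FS₁ → F + S₀` satisfies `w·(y' − y) = −1 < 0`.
Consequently the network is not endotactic. -/
theorem processive_not_endotactic (n : ℕ) (hn : 1 ≤ n) :
    (∀ r ∈ procReactions n, dot (wproc n) r.1 = 1) ∧
    dot (wproc n) ((unitv n (2 * n) + unitv n (2 * n + 3)) - unitv n n) = -1 ∧
    ¬ EndotacticSet (procReactions n) := by
  have hsrc : ∀ r ∈ procReactions n, dot (wproc n) r.1 = 1 := by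
    rintro r (rfl | rfl | ⟨i, hi, rfl⟩ | ⟨i, hi, rfl⟩ | rfl | rfl | rfl | ⟨i, hi1, hi2, rfl⟩ |
      ⟨i, hi1, hi2, rfl⟩ | rfl) <;>
      simp only [dot_add, dval] <;>
      split_ifs <;> first | omega | norm_num
  have hkey : dot (wproc n) ((unitv n (2 * n) + unitv n (2 * n + 3)) - unitv n n) = -1 := by
    rw [dot_sub, dot_add]
    simp only [dval]
    split_ifs <;> first | omega | norm_num
  refine ⟨hsrc, hkey, fun hEnd => ?_⟩
  have hr : (unitv n n, unitv n (2 * n) + unitv n (2 * n + 3)) ∈ procReactions n := by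
    right; right; right; right; right; right; right; right; right; rfl
  obtain ⟨r', hr', h1, _⟩ := hEnd (wproc n) _ hr (by simpa using hkey.le.trans_lt (by norm_num))
  rw [dot_sub, hsrc r' hr'] at h1
  have := hsrc _ hr
  simp only at this
  rw [this] at h1
  linarith
end

section
/- Any single-species reaction network that is weakly reversible is endotactic. -/
/-- The one-step relation of a single-species network: `a` reacts to `b`. -/
def Reacts {ι : Type*} (y y' : ι → ℝ) (a b : ℝ) : Prop :=
  ∃ i : ι, y i = a ∧ y' i = b

/-- A single-species network is weakly reversible: every reaction lies on a
directed cycle, i.e. there is a directed path from its target back to its source. -/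
def WeaklyReversible1 {ι : Type*} (y y' : ι → ℝ) : Prop :=
  ∀ i : ι, Relation.ReflTransGen (Reacts y y') (y' i) (y i)

lemma path_down {ι : Type*} (y y' : ι → ℝ) {a b : ℝ}
    (h : Relation.ReflTransGen (Reacts y y') a b) (hba : b < a) :
    ∃ j : ι, y' j < y j ∧ a ≤ y j := by
  induction h using Relation.ReflTransGen.head_induction_on with
  | refl => exact absurd hba (lt_irrefl _)
  | head hstep hpath ih =>
    rename_i a m
    obtain ⟨j, hja, hjm⟩ := hstep
    by_cases hm : m < a
    · exact ⟨j, by rw [hja, hjm]; exact hm, le_of_eq hja.symm⟩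
    · obtain ⟨j, hj, hj2⟩ := ih (lt_of_lt_of_le hba (not_lt.mp hm))
      exact ⟨j, hj, le_trans (not_lt.mp hm) hj2⟩

lemma path_up {ι : Type*} (y y' : ι → ℝ) {a b : ℝ}
    (h : Relation.ReflTransGen (Reacts y y') a b) (hab : a < b) :
    ∃ j : ι, y j < y' j ∧ y j ≤ a := by
  induction h using Relation.ReflTransGen.head_induction_on with
  | refl => exact absurd hab (lt_irrefl _)
  | head hstep hpath ih =>
    rename_i a m
    obtain ⟨j, hja, hjm⟩ := hstep
    by_cases hm : a < m
    · exact ⟨j, by rw [hja, hjm]; exact hm, le_of_eq hja⟩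
    · obtain ⟨j, hj, hj2⟩ := ih (lt_of_le_of_lt (not_lt.mp hm) hab)
      exact ⟨j, hj, le_trans hj2 (not_lt.mp hm)⟩

/-- Any weakly reversible single-species network is endotactic
(conditions (+) and (−)). -/
theorem weaklyReversible_oneD_endotactic {ι : Type*} [Fintype ι]
    (y y' : ι → ℝ) (hwr : WeaklyReversible1 y y') :
    (∀ i : ι, y i < y' i → ∃ j : ι, y' j < y j ∧ y i < y j) ∧
    (∀ i : ι, y' i < y i → ∃ j : ι, y j < y' j ∧ y j < y i) := by
  constructor
  · intro i hi
    obtain ⟨j, hj, hj2⟩ := path_down y y' (hwr i) hi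
    exact ⟨j, hj, lt_of_lt_of_le hi hj2⟩
  · intro i hi
    obtain ⟨j, hj, hj2⟩ := path_up y y' (hwr i) hi
    exact ⟨j, hj, lt_of_le_of_lt hj2 hi⟩
end
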